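/- arXiv:2508.21242 — 4 statements merged into one kernel-verified Lean document; each statement's English description precedes it below -/
import Mathlib

section
/- Let X be a Banach space and T : X → X a bounded linear operator with ‖T − T²‖ < 1/4. Then the operator S = Σ_{m=0}^∞ binom(2m, m) (T − T²)^m converges in operator norm and satisfies (I − 2T)² S² = I, where I is the identity operator. -/
open Finset

noncomputable def bb (k : ℕ) : ℝ := (Nat.centralBinom k : ℝ) / 4 ^ k

lemma bb_zero : bb 0 = 1 := by simp [bb]

lemma bb_rec (k : ℕ) : (2 * (k : ℝ) + 2) * bb (k + 1) = (2 * k + 1) * bb k := by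
  have h := Nat.succ_mul_centralBinom_succ k
  have h' : ((k : ℝ) + 1) * (Nat.centralBinom (k + 1) : ℝ)
      = 2 * (2 * k + 1) * (Nat.centralBinom k : ℝ) := by exact_mod_cast h
  have h4 : (4 : ℝ) ^ (k + 1) = 4 * 4 ^ k := by ring
  simp only [bb, h4]
  have hp : (4 : ℝ) ^ k ≠ 0 := by positivity
  field_simp
  linear_combination 2 * h'

lemma bb_wsum (n : ℕ) :
    2 * ∑ k ∈ range (n + 1), (k : ℝ) * (bb k * bb (n - k))
      = (n : ℝ) * ∑ k ∈ range (n + 1), bb k * bb (n - k) := by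
  have hrefl := Finset.sum_range_reflect (fun k => (k : ℝ) * (bb k * bb (n - k))) (n + 1)
  have h2 : ∑ k ∈ range (n + 1), ((n + 1 - 1 - k : ℕ) : ℝ) * (bb (n + 1 - 1 - k) * bb (n - (n + 1 - 1 - k)))
      = ∑ k ∈ range (n + 1), (((n : ℝ) - k) * (bb k * bb (n - k))) := by
    apply Finset.sum_congr rfl
    intro k hk
    have hk' : k ≤ n := by simpa [Nat.lt_succ_iff] using hk
    have e1 : n + 1 - 1 - k = n - k := by omega
    have e2 : n - (n - k) = k := by omega
    rw [e1, e2, Nat.cast_sub hk', mul_comm (bb (n - k)) (bb k)]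
  rw [h2] at hrefl
  have := hrefl
  have expand : ∑ k ∈ range (n + 1), (((n : ℝ) - k) * (bb k * bb (n - k)))
      = (n : ℝ) * ∑ k ∈ range (n + 1), bb k * bb (n - k)
        - ∑ k ∈ range (n + 1), (k : ℝ) * (bb k * bb (n - k)) := by
    rw [Finset.mul_sum, ← Finset.sum_sub_distrib]
    apply Finset.sum_congr rfl
    intro k _; ring
  rw [expand] at this
  linarith [this]

lemma bb_conv (n : ℕ) : ∑ k ∈ range (n + 1), bb k * bb (n - k) = 1 := by
  induction n with
  | zero => simp [bb_zero]
  | succ n ih =>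
    -- key chain
    have A : ∑ k ∈ range (n + 1), (2 * (k : ℝ) + 1) * (bb k * bb (n - k))
        = ((n : ℝ) + 1) * ∑ k ∈ range (n + 1), bb k * bb (n - k) := by
      have hw := bb_wsum n
      have : ∑ k ∈ range (n + 1), (2 * (k : ℝ) + 1) * (bb k * bb (n - k))
          = 2 * ∑ k ∈ range (n + 1), (k : ℝ) * (bb k * bb (n - k))
            + ∑ k ∈ range (n + 1), bb k * bb (n - k) := by
        rw [Finset.mul_sum, ← Finset.sum_add_distrib]
        apply Finset.sum_congr rfl; intro k _; ring
      rw [this, hw]; ring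
    have B : ∑ k ∈ range (n + 1), (2 * (k : ℝ) + 1) * (bb k * bb (n - k))
        = ∑ k ∈ range (n + 1), (2 * (k : ℝ) + 2) * (bb (k + 1) * bb (n - k)) := by
      apply Finset.sum_congr rfl
      intro k _
      have := bb_rec k
      calc (2 * (k : ℝ) + 1) * (bb k * bb (n - k))
          = ((2 * (k : ℝ) + 1) * bb k) * bb (n - k) := by ring
        _ = ((2 * (k : ℝ) + 2) * bb (k + 1)) * bb (n - k) := by rw [← this]
        _ = (2 * (k : ℝ) + 2) * (bb (k + 1) * bb (n - k)) := by ring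
    have C : ∑ j ∈ range (n + 2), (2 * (j : ℝ)) * (bb j * bb (n + 1 - j))
        = ∑ k ∈ range (n + 1), (2 * (k : ℝ) + 2) * (bb (k + 1) * bb (n - k)) := by
      rw [Finset.sum_range_succ']
      simp only [Nat.cast_zero, mul_zero, zero_mul, add_zero]
      apply Finset.sum_congr rfl
      intro k _
      have e : n + 1 - (k + 1) = n - k := by omega
      rw [e]; push_cast; ring
    have D : 2 * ∑ j ∈ range (n + 2), (j : ℝ) * (bb j * bb (n + 1 - j))
        = ((n : ℝ) + 1) * ∑ j ∈ range (n + 2), bb j * bb (n + 1 - j) := by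
      have := bb_wsum (n + 1)
      push_cast at this
      convert this using 2
    have C' : ∑ j ∈ range (n + 2), (2 * (j : ℝ)) * (bb j * bb (n + 1 - j))
        = 2 * ∑ j ∈ range (n + 2), (j : ℝ) * (bb j * bb (n + 1 - j)) := by
      rw [Finset.mul_sum]; apply Finset.sum_congr rfl; intro j _; ring
    have key : ((n : ℝ) + 1) * ∑ j ∈ range (n + 2), bb j * bb (n + 1 - j)
        = ((n : ℝ) + 1) * ∑ k ∈ range (n + 1), bb k * bb (n - k) := by
      rw [← D, ← C', C, ← B, A]
    have hne : ((n : ℝ) + 1) ≠ 0 := by positivity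
    have := mul_left_cancel₀ hne key
    rw [this, ih]

lemma centralBinom_le_four_pow (n : ℕ) : Nat.centralBinom n ≤ 4 ^ n := by
  have h : (2 * n).choose n ≤ ∑ i ∈ range (2 * n + 1), (2 * n).choose i :=
    Finset.single_le_sum (fun i _ => Nat.zero_le _) (by simp [Nat.lt_succ_iff]; omega)
  rw [Nat.sum_range_choose] at h
  calc Nat.centralBinom n = (2 * n).choose n := rfl
    _ ≤ 2 ^ (2 * n) := h
    _ = 4 ^ n := by rw [pow_mul]; norm_num

lemma centralBinom_conv (n : ℕ) :
    ∑ k ∈ range (n + 1), (Nat.centralBinom k : ℝ) * (Nat.centralBinom (n - k) : ℝ) = 4 ^ n := by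
  have := bb_conv n
  have h : ∑ k ∈ range (n + 1), bb k * bb (n - k)
      = (∑ k ∈ range (n + 1), (Nat.centralBinom k : ℝ) * (Nat.centralBinom (n - k) : ℝ)) / 4 ^ n := by
    rw [Finset.sum_div]
    apply Finset.sum_congr rfl
    intro k hk
    have hk' : k ≤ n := by simpa [Nat.lt_succ_iff] using hk
    have e : (4 : ℝ) ^ k * 4 ^ (n - k) = 4 ^ n := by
      rw [← pow_add, Nat.add_sub_cancel' hk']
    simp only [bb, div_mul_div_comm, e]
  rw [h] at this
  have hp : (4 : ℝ) ^ n ≠ 0 := by positivity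
  field_simp at this
  linarith [this]

set_option maxHeartbeats 1000000
set_option synthInstance.maxHeartbeats 1000000

/-- if `‖T - T²‖ < 1/4` then the central-binomial series
`S = Σ binom(2m,m) (T - T²)^m` converges in operator norm and `(I - 2T)² S² = I`. -/
theorem stmt_6 {X : Type*} [NormedAddCommGroup X] [NormedSpace ℝ X] [CompleteSpace X]
    (T : X →L[ℝ] X) (hT : ‖T - T ^ 2‖ < 1 / 4) :
    ∃ S : X →L[ℝ] X,
      HasSum (fun m : ℕ => (Nat.centralBinom m : ℝ) • (T - T ^ 2) ^ m) S ∧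
      ((1 : X →L[ℝ] X) - 2 • T) ^ 2 * S ^ 2 = 1 := by
  set A : X →L[ℝ] X := T - T ^ 2 with hA
  set f : ℕ → (X →L[ℝ] X) := fun m => (Nat.centralBinom m : ℝ) • A ^ m with hf
  have hApow : ∀ m : ℕ, ‖A ^ m‖ ≤ ‖A‖ ^ m := by
    intro m
    cases m with
    | zero => rw [pow_zero, pow_zero]; exact ContinuousLinearMap.norm_id_le
    | succ n => exact norm_pow_le' A (Nat.succ_pos n)
  have hbound : ∀ m : ℕ, ‖f m‖ ≤ (4 * ‖A‖) ^ m := by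
    intro m
    calc ‖f m‖ = |(Nat.centralBinom m : ℝ)| * ‖A ^ m‖ := by
          have h := norm_smul ((Nat.centralBinom m : ℝ)) (A ^ m)
          rw [Real.norm_eq_abs] at h
          exact h
      _ ≤ (4 : ℝ) ^ m * ‖A‖ ^ m := by
          apply mul_le_mul _ (hApow m) (norm_nonneg _) (by positivity)
          rw [abs_of_nonneg (by positivity)]
          exact_mod_cast centralBinom_le_four_pow m
      _ = (4 * ‖A‖) ^ m := (mul_pow _ _ _).symm
  have h4A : 4 * ‖A‖ < 1 := by linarith
  have hnorm : Summable fun m => ‖f m‖ :=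
    Summable.of_nonneg_of_le (fun m => norm_nonneg _) hbound
      (summable_geometric_of_lt_one (by positivity) h4A)
  have hsum : Summable f := hnorm.of_norm
  refine ⟨∑' m, f m, hsum.hasSum, ?_⟩
  set S : X →L[ℝ] X := ∑' m, f m with hS
  have hSS : S * S = ∑' n : ℕ, ((4 : ℝ) • A) ^ n := by
    rw [hS, tsum_mul_tsum_eq_tsum_sum_range_of_summable_norm hnorm hnorm]
    congr 1
    funext n
    have hterm : ∑ k ∈ Finset.range (n + 1), f k * f (n - k)
        = (∑ k ∈ Finset.range (n + 1),
            (Nat.centralBinom k : ℝ) * (Nat.centralBinom (n - k) : ℝ)) • A ^ n := by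
      rw [Finset.sum_smul]
      apply Finset.sum_congr rfl
      intro k hk
      have hk' : k ≤ n := by simpa [Nat.lt_succ_iff] using hk
      simp only [hf, smul_mul_smul_comm, ← pow_add, Nat.add_sub_cancel' hk']
    rw [hterm, centralBinom_conv n, smul_pow]
  have hx : ‖(4 : ℝ) • A‖ < 1 := by
    calc ‖(4 : ℝ) • A‖ = ‖(4:ℝ)‖ * ‖A‖ := norm_smul (4:ℝ) A
      _ < 1 := by rw [Real.norm_eq_abs]; rw [abs_of_nonneg (by norm_num)]; linarith
  have hfactor : ((1 : X →L[ℝ] X) - 2 • T) ^ 2 = 1 - (4 : ℝ) • A := by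
    show ((1 : X →L[ℝ] X) - 2 • T) ^ 2 = 1 - (4 : ℝ) • (T - T ^ 2)
    have h4 : (4 : ℝ) • (T - T ^ 2) = (4 : ℕ) • (T - T ^ 2 : X →L[ℝ] X) := by
      rw [← Nat.cast_smul_eq_nsmul ℝ]; norm_num
    rw [h4]
    simp only [nsmul_eq_mul, Nat.cast_ofNat]
    noncomm_ring
  rw [hfactor, sq S, hSS]
  exact mul_neg_geom_series _ hx
end

section
/- Let X be a Banach space and T a bounded operator with ‖T − T²‖ ≤ θ < 1/4. Define S = Σ_{m=0}^∞ binom(2m,m)(T − T²)^m and P = (1/2)(I − (I − 2T)S). Then ‖S‖ ≤ (1 − 4θ)^{-1/2} and ‖P‖ ≤ (1/2)(1 + (1 + 2‖T‖)/√(1 − 4θ)). -/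
open Finset Polynomial

private lemma ringChoose_succ (r : ℚ) (m : ℕ) :
    Ring.choose r (m + 1) * (m + 1) = Ring.choose r m * (r - m) := by
  have h1 := Ring.descPochhammer_eq_factorial_smul_choose (R := ℚ) r (m + 1)
  have h2 := Ring.descPochhammer_eq_factorial_smul_choose (R := ℚ) r m
  rw [descPochhammer_succ_right, Polynomial.smeval_mul] at h1
  simp only [Polynomial.smeval_sub, Polynomial.smeval_X, Polynomial.smeval_natCast, pow_one,
    pow_zero, smul_eq_mul, mul_one, nsmul_eq_mul, Nat.factorial_succ, Nat.cast_mul] at h1 h2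
  rw [h2] at h1
  push_cast at h1
  have hf : (Nat.factorial m : ℚ) ≠ 0 := by positivity
  have key : (Nat.factorial m : ℚ) * (Ring.choose r (m + 1) * (m + 1)) =
      (Nat.factorial m : ℚ) * (Ring.choose r m * (r - m)) := by linear_combination -h1
  exact mul_left_cancel₀ hf key

private lemma ringChoose_neg_one (n : ℕ) : Ring.choose (-1 : ℚ) n = (-1) ^ n := by
  induction n with
  | zero => simp [Ring.choose_zero_right]
  | succ m ih =>
    have h := ringChoose_succ (-1) m
    rw [ih] at h
    have hm : ((m : ℚ) + 1) ≠ 0 := by positivity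
    have : Ring.choose (-1 : ℚ) (m + 1) * (m + 1) = (-1) ^ (m + 1) * (m + 1) := by
      rw [h]; ring
    exact mul_right_cancel₀ hm this

private lemma ringChoose_half (m : ℕ) :
    Ring.choose (-(1/2) : ℚ) m * (-4) ^ m = Nat.centralBinom m := by
  induction m with
  | zero => simp [Ring.choose_zero_right]
  | succ m ih =>
    have h := ringChoose_succ (-(1/2)) m
    have hrec := Nat.succ_mul_centralBinom_succ m
    have hrecQ : ((m : ℚ) + 1) * (Nat.centralBinom (m + 1) : ℚ)
        = 2 * (2 * m + 1) * (Nat.centralBinom m : ℚ) := by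
      exact_mod_cast congrArg (Nat.cast : ℕ → ℚ) hrec
    have hm : ((m : ℚ) + 1) ≠ 0 := by positivity
    have : Ring.choose (-(1/2) : ℚ) (m + 1) * (-4) ^ (m + 1) * (m + 1)
        = (Nat.centralBinom (m + 1) : ℚ) * (m + 1) := by
      rw [show Ring.choose (-(1/2) : ℚ) (m + 1) * (-4) ^ (m + 1) * (m + 1)
          = (Ring.choose (-(1/2) : ℚ) (m + 1) * (m + 1)) * ((-4) ^ m * (-4)) by ring, h]
      rw [show Ring.choose (-(1/2) : ℚ) m * (-(1/2) - m) * ((-4) ^ m * (-4))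
          = (Ring.choose (-(1/2) : ℚ) m * (-4) ^ m) * ((-(1/2) - m) * (-4)) by ring, ih]
      linear_combination -hrecQ
    exact mul_right_cancel₀ hm this

private lemma centralBinom_conv_s8 (n : ℕ) :
    ∑ ij ∈ antidiagonal n, (Nat.centralBinom ij.1 : ℝ) * (Nat.centralBinom ij.2 : ℝ)
      = 4 ^ n := by
  have hQ : ∑ ij ∈ antidiagonal n, (Nat.centralBinom ij.1 : ℚ) * (Nat.centralBinom ij.2 : ℚ)
      = 4 ^ n := by
    have hV := Ring.add_choose_eq (r := (-(1/2) : ℚ)) (s := (-(1/2) : ℚ)) n (Commute.all _ _)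
    have : ((-(1/2) : ℚ) + -(1/2)) = -1 := by norm_num
    rw [this, ringChoose_neg_one] at hV
    have := congrArg (· * (-4 : ℚ) ^ n) hV
    simp only [Finset.sum_mul] at this
    rw [show ((-1 : ℚ)) ^ n * (-4) ^ n = 4 ^ n by rw [← mul_pow]; norm_num] at this
    rw [this]
    apply Finset.sum_congr rfl
    intro ij hij
    have hij' : ij.1 + ij.2 = n := Finset.HasAntidiagonal.mem_antidiagonal.mp hij
    rw [← hij', pow_add,
      show Ring.choose (-(1/2) : ℚ) ij.1 * Ring.choose (-(1/2) : ℚ) ij.2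
        * ((-4 : ℚ) ^ ij.1 * (-4) ^ ij.2)
        = (Ring.choose (-(1/2) : ℚ) ij.1 * (-4) ^ ij.1)
          * (Ring.choose (-(1/2) : ℚ) ij.2 * (-4) ^ ij.2) by ring,
      ringChoose_half, ringChoose_half]
  have hN : ∑ ij ∈ antidiagonal n, Nat.centralBinom ij.1 * Nat.centralBinom ij.2 = 4 ^ n := by
    exact_mod_cast hQ
  exact_mod_cast congrArg (Nat.cast : ℕ → ℝ) hN


/-- norm estimates `‖S‖ ≤ (1-4θ)^{-1/2}` and
`‖P‖ ≤ (1/2)(1 + (1 + 2‖T‖)/√(1-4θ))`. -/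
theorem stmt_8 {X : Type*} [NormedAddCommGroup X] [NormedSpace ℝ X] [CompleteSpace X]
    (T : X →L[ℝ] X) (θ : ℝ) (hθ : θ < 1 / 4) (hT : ‖T - T ^ 2‖ ≤ θ)
    (S : X →L[ℝ] X)
    (hS : HasSum (fun m : ℕ => (Nat.centralBinom m : ℝ) • (T - T ^ 2) ^ m) S) :
    ‖S‖ ≤ (Real.sqrt (1 - 4 * θ))⁻¹ ∧
      ‖(1 / 2 : ℝ) • ((1 : X →L[ℝ] X) - ((1 : X →L[ℝ] X) - 2 • T) * S)‖ ≤
        (1 / 2) * (1 + (1 + 2 * ‖T‖) / Real.sqrt (1 - 4 * θ)) := by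
  have hθ0 : 0 ≤ θ := le_trans (norm_nonneg _) hT
  have h1m : 0 < 1 - 4 * θ := by linarith
  have hsq : 0 < Real.sqrt (1 - 4 * θ) := Real.sqrt_pos.mpr h1m
  set a : ℕ → ℝ := fun m => (Nat.centralBinom m : ℝ) * θ ^ m with ha
  have ha0 : ∀ m, 0 ≤ a m := fun m => by positivity
  have hCle : ∀ m, (Nat.centralBinom m : ℝ) ≤ 4 ^ m := by
    intro m
    have h1 : Nat.centralBinom m ≤ (2 * m + 1).choose m :=
      Nat.choose_le_choose m (by omega)
    have h2 := Nat.choose_middle_le_pow m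
    exact_mod_cast le_trans h1 h2
  have hale : ∀ m, a m ≤ (4 * θ) ^ m := by
    intro m
    rw [mul_pow]
    exact mul_le_mul_of_nonneg_right (hCle m) (by positivity)
  have hgeo : Summable (fun m : ℕ => (4 * θ) ^ m) :=
    summable_geometric_of_lt_one (by positivity) (by linarith)
  have hsum : Summable a := hgeo.of_nonneg_of_le ha0 hale
  have hsumnorm : Summable (fun m => ‖a m‖) := by
    simpa [Real.norm_of_nonneg (ha0 _)] using hsum
  set A : ℝ := ∑' m, a m with hA
  have hA0 : 0 ≤ A := tsum_nonneg ha0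
  have hA2 : A * A = (1 - 4 * θ)⁻¹ := by
    rw [hA, tsum_mul_tsum_eq_tsum_sum_antidiagonal_of_summable_norm hsumnorm hsumnorm]
    have hinner : ∀ n : ℕ, (∑ kl ∈ antidiagonal n, a kl.1 * a kl.2) = (4 * θ) ^ n := by
      intro n
      have : (∑ kl ∈ antidiagonal n, a kl.1 * a kl.2)
          = ∑ kl ∈ antidiagonal n,
            ((Nat.centralBinom kl.1 : ℝ) * (Nat.centralBinom kl.2 : ℝ)) * θ ^ n := by
        apply Finset.sum_congr rfl
        intro kl hkl
        have h : kl.1 + kl.2 = n := Finset.HasAntidiagonal.mem_antidiagonal.mp hkl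
        rw [← h, pow_add, ha]
        ring
      rw [this, ← Finset.sum_mul, centralBinom_conv_s8, mul_pow]
    simp_rw [hinner]
    rw [tsum_geometric_of_lt_one (by positivity) (by linarith)]
  have hAval : A = (Real.sqrt (1 - 4 * θ))⁻¹ := by
    have h1 : A = Real.sqrt (A * A) := (Real.sqrt_mul_self hA0).symm
    rw [h1, hA2, ← Real.sqrt_inv]
  -- part 1
  have hterm : ∀ m : ℕ, ‖(Nat.centralBinom m : ℝ) • (T - T ^ 2) ^ m‖ ≤ a m := by
    intro m
    refine le_trans (ContinuousLinearMap.opNorm_smul_le _ _) ?_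
    rw [Real.norm_of_nonneg (by positivity : (0:ℝ) ≤ (Nat.centralBinom m : ℝ))]
    refine mul_le_mul_of_nonneg_left ?_ (by positivity)
    cases m with
    | zero => rw [pow_zero, pow_zero]; exact ContinuousLinearMap.norm_id_le
    | succ k =>
      calc ‖(T - T ^ 2) ^ (k + 1)‖ ≤ ‖T - T ^ 2‖ ^ (k + 1) := norm_pow_le' _ k.succ_pos
        _ ≤ θ ^ (k + 1) := pow_le_pow_left₀ (norm_nonneg _) hT _
  have hsumnorm2 : Summable (fun m => ‖(Nat.centralBinom m : ℝ) • (T - T ^ 2) ^ m‖) :=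
    hsum.of_nonneg_of_le (fun m => norm_nonneg _) hterm
  have hS1 : ‖S‖ ≤ A := by
    rw [← hS.tsum_eq]
    calc ‖∑' m, (Nat.centralBinom m : ℝ) • (T - T ^ 2) ^ m‖
        ≤ ∑' m, ‖(Nat.centralBinom m : ℝ) • (T - T ^ 2) ^ m‖ := norm_tsum_le_tsum_norm hsumnorm2
      _ ≤ ∑' m, a m := Summable.tsum_le_tsum hterm hsumnorm2 hsum
  rw [← hAval]
  refine ⟨hS1, ?_⟩
  -- part 2
  have hone : ‖(1 : X →L[ℝ] X)‖ ≤ 1 := ContinuousLinearMap.norm_id_le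
  have h2T : ‖(1 : X →L[ℝ] X) - 2 • T‖ ≤ 1 + 2 * ‖T‖ := by
    calc ‖(1 : X →L[ℝ] X) - 2 • T‖ ≤ ‖(1 : X →L[ℝ] X)‖ + ‖2 • T‖ := norm_sub_le _ _
      _ ≤ 1 + 2 * ‖T‖ := by
          gcongr
          rw [two_smul]
          calc ‖T + T‖ ≤ ‖T‖ + ‖T‖ := norm_add_le _ _
            _ = 2 * ‖T‖ := by ring
  have hAd : A = 1 / Real.sqrt (1 - 4 * θ) := by rw [hAval, one_div]
  calc ‖(1 / 2 : ℝ) • ((1 : X →L[ℝ] X) - ((1 : X →L[ℝ] X) - 2 • T) * S)‖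
      ≤ (1 / 2) * ‖(1 : X →L[ℝ] X) - ((1 : X →L[ℝ] X) - 2 • T) * S‖ := by
        refine le_trans (ContinuousLinearMap.opNorm_smul_le _ _) ?_
        norm_num
    _ ≤ (1 / 2) * (1 + (1 + 2 * ‖T‖) * A) := by
        gcongr (1/2) * ?_
        calc ‖(1 : X →L[ℝ] X) - ((1 : X →L[ℝ] X) - 2 • T) * S‖
            ≤ ‖(1 : X →L[ℝ] X)‖ + ‖((1 : X →L[ℝ] X) - 2 • T) * S‖ := norm_sub_le _ _
          _ ≤ 1 + (1 + 2 * ‖T‖) * A := by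
              refine add_le_add hone ?_
              calc ‖((1 : X →L[ℝ] X) - 2 • T) * S‖ ≤ ‖(1 : X →L[ℝ] X) - 2 • T‖ * ‖S‖ :=
                    norm_mul_le _ _
                _ ≤ (1 + 2 * ‖T‖) * A := by
                    apply mul_le_mul h2T hS1 (norm_nonneg _) (by positivity)
    _ = (1 / 2) * (1 + (1 + 2 * ‖T‖) / Real.sqrt (1 - 4 * θ)) := by
        rw [hAd]; ring
end

section
/- Let X be a Banach space and T a bounded operator with ‖T − T²‖ ≤ θ < 1/4. Let P = (1/2)(I − (I − 2T)S) with S = Σ_{m=0}^∞ binom(2m,m)(T − T²)^m. Then every fixed point of T is a fixed point of P: if Tx = x then Px = x. -/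
/-- every fixed point of `T` is a fixed point of `P`. -/
theorem stmt_10 {X : Type*} [NormedAddCommGroup X] [NormedSpace ℝ X] [CompleteSpace X]
    (T : X →L[ℝ] X) (θ : ℝ) (hθ : θ < 1 / 4) (hT : ‖T - T ^ 2‖ ≤ θ)
    (S : X →L[ℝ] X)
    (hS : HasSum (fun m : ℕ => (Nat.centralBinom m : ℝ) • (T - T ^ 2) ^ m) S)
    (x : X) (hx : T x = x) :
    ((1 / 2 : ℝ) • ((1 : X →L[ℝ] X) - ((1 : X →L[ℝ] X) - 2 • T) * S)) x = x := by
  have hAx : (T - T ^ 2) x = 0 := by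
    simp [ContinuousLinearMap.sub_apply, pow_two, ContinuousLinearMap.mul_apply, hx]
  have hpow : ∀ m : ℕ, ((T - T ^ 2) ^ m) x = if m = 0 then x else 0 := by
    intro m
    induction m with
    | zero => simp
    | succ n ih =>
      rw [pow_succ, ContinuousLinearMap.mul_apply, hAx]
      rw [map_zero]
      simp
  have hSx : S x = x := by
    have h1 : HasSum (fun m : ℕ => ((Nat.centralBinom m : ℝ) • (T - T ^ 2) ^ m) x) (S x) :=
      hS.mapL (ContinuousLinearMap.apply ℝ X x)
    have h2 : HasSum (fun m : ℕ => ((Nat.centralBinom m : ℝ) • (T - T ^ 2) ^ m) x) x := by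
      have : (fun m : ℕ => ((Nat.centralBinom m : ℝ) • (T - T ^ 2) ^ m) x)
          = fun m : ℕ => if m = 0 then x else 0 := by
        funext m
        simp [hpow m]
        rcases m with _ | n <;> simp [Nat.centralBinom]
      rw [this]
      exact hasSum_ite_eq 0 x
    exact h1.unique h2
  simp [ContinuousLinearMap.smul_apply, ContinuousLinearMap.sub_apply,
    ContinuousLinearMap.mul_apply, hSx, hx, smul_sub, smul_smul]
  module
end

section
/- Let X be a Banach space and T a finite-rank bounded operator with ‖T − T²‖ ≤ θ < 1/4. Then the projection P = (1/2)(I − (I − 2T)S), where S = Σ_{m=0}^∞ binom(2m,m)(T − T²)^m, satisfies range(P) ⊆ range(T); in particular P has finite rank. -/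
/-- if `T` has finite rank then `range P ⊆ range T`, so `P` has finite rank. -/
theorem stmt_11 {X : Type*} [NormedAddCommGroup X] [NormedSpace ℝ X] [CompleteSpace X]
    (T : X →L[ℝ] X) (hfin : FiniteDimensional ℝ (LinearMap.range (T : X →ₗ[ℝ] X)))
    (θ : ℝ) (hθ : θ < 1 / 4) (hT : ‖T - T ^ 2‖ ≤ θ)
    (S : X →L[ℝ] X)
    (hS : HasSum (fun m : ℕ => (Nat.centralBinom m : ℝ) • (T - T ^ 2) ^ m) S) :
    LinearMap.range (((1 / 2 : ℝ) • ((1 : X →L[ℝ] X) - ((1 : X →L[ℝ] X) - 2 • T) * S) : X →L[ℝ] X) : X →ₗ[ℝ] X) ≤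
        LinearMap.range (T : X →ₗ[ℝ] X) ∧
      FiniteDimensional ℝ
        (LinearMap.range (((1 / 2 : ℝ) • ((1 : X →L[ℝ] X) - ((1 : X →L[ℝ] X) - 2 • T) * S) : X →L[ℝ] X) : X →ₗ[ℝ] X)) := by
  set P := (1 / 2 : ℝ) • ((1 : X →L[ℝ] X) - ((1 : X →L[ℝ] X) - 2 • T) * S) with hP
  have hcomm : Commute T ((1 : X →L[ℝ] X) - 2 • T) := by
    have : ((2:ℕ) • T) = T + T := two_nsmul T
    rw [this]
    exact (Commute.one_right T).sub_right ((Commute.refl T).add_right (Commute.refl T))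
  have key : ∀ m : ℕ, ((1 : X →L[ℝ] X) - 2 • T) * (T - T ^ 2) ^ (m + 1)
      = T * (((1 : X →L[ℝ] X) - 2 • T) * ((1 - T) * (T - T ^ 2) ^ m)) := by
    intro m
    have hTT : T - T ^ 2 = T * (1 - T) := by
      rw [mul_sub, mul_one, sq]
    calc ((1 : X →L[ℝ] X) - 2 • T) * (T - T ^ 2) ^ (m + 1)
        = ((1 : X →L[ℝ] X) - 2 • T) * ((T * (1 - T)) * (T - T ^ 2) ^ m) := by
          rw [pow_succ']; rw [← hTT]
      _ = (((1 : X →L[ℝ] X) - 2 • T) * T) * ((1 - T) * (T - T ^ 2) ^ m) := by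
          rw [mul_assoc, mul_assoc]
      _ = (T * ((1 : X →L[ℝ] X) - 2 • T)) * ((1 - T) * (T - T ^ 2) ^ m) := by
          rw [hcomm.eq]
      _ = T * (((1 : X →L[ℝ] X) - 2 • T) * ((1 - T) * (T - T ^ 2) ^ m)) := by
          rw [mul_assoc]
  have hle : LinearMap.range (P : X →ₗ[ℝ] X) ≤ LinearMap.range (T : X →ₗ[ℝ] X) := by
    rintro _ ⟨x, rfl⟩
    -- pointwise sum
    have hSx : HasSum (fun m : ℕ => ((Nat.centralBinom m : ℝ) • (T - T ^ 2) ^ m) x) (S x) :=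
      hS.mapL (ContinuousLinearMap.apply ℝ X x)
    have hFx : HasSum
        (fun m : ℕ => (Nat.centralBinom m : ℝ) •
          ((((1 : X →L[ℝ] X) - 2 • T) * (T - T ^ 2) ^ m) x))
        ((((1 : X →L[ℝ] X) - 2 • T)) (S x)) := by
      have := hSx.mapL ((1 : X →L[ℝ] X) - 2 • T)
      simpa [ContinuousLinearMap.mul_apply, map_smul] using this
    set f : ℕ → X := fun m => (Nat.centralBinom m : ℝ) •
      ((((1 : X →L[ℝ] X) - 2 • T) * (T - T ^ 2) ^ m) x) with hf
    have hF' : HasSum (fun n : ℕ => f (n + 1))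
        ((((1 : X →L[ℝ] X) - 2 • T)) (S x) - ∑ i ∈ Finset.range 1, f i) :=
      (hasSum_nat_add_iff' 1).mpr hFx
    have hmem : ∀ n : ℕ, f (n + 1) ∈ LinearMap.range (T : X →ₗ[ℝ] X) := by
      intro n
      rw [hf]
      simp only [key n]
      refine Submodule.smul_mem _ _ ?_
      exact ⟨_, rfl⟩
    have hclosed : IsClosed ((LinearMap.range (T : X →ₗ[ℝ] X) : Submodule ℝ X) : Set X) :=
      Submodule.closed_of_finiteDimensional _
    have htmem : (((1 : X →L[ℝ] X) - 2 • T)) (S x) - ∑ i ∈ Finset.range 1, f i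
        ∈ LinearMap.range (T : X →ₗ[ℝ] X) := by
      refine hclosed.mem_of_tendsto hF'.tendsto_sum_nat
        (Filter.Eventually.of_forall fun n => ?_)
      exact Submodule.sum_mem _ fun i _ => hmem i
    set t' := (((1 : X →L[ℝ] X) - 2 • T)) (S x) - ∑ i ∈ Finset.range 1, f i with ht'
    have hPx : P x = T x - (1 / 2 : ℝ) • t' := by
      have hf0 : f 0 = x - 2 • T x := by
        simp [hf, Nat.centralBinom_zero]
      rw [ht']
      simp only [Finset.range_one, Finset.sum_singleton, hf0]
      rw [hP]
      simp only [ContinuousLinearMap.smul_apply, ContinuousLinearMap.sub_apply,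
        ContinuousLinearMap.one_apply, ContinuousLinearMap.mul_apply]
      have h2 : (2 : ℕ) • T x = (2 : ℝ) • T x := by
        rw [two_nsmul, two_smul]
      rw [h2]
      module
    change P x ∈ LinearMap.range (T : X →ₗ[ℝ] X)
    rw [hPx]
    exact Submodule.sub_mem _ ⟨x, rfl⟩ (Submodule.smul_mem _ _ htmem)
  exact ⟨hle, Submodule.finiteDimensional_of_le hle⟩
end
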